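/- Let G be a 2-connected graph and let x, y be distinct vertices of G. For any x,y-path W in G, there exist two internally disjoint x,y-paths P1, P2 in G each of which is aligned with W. -/

import Mathlib

open SimpleGraph

/-- `P'` is aligned with `P` (both starting at `x`): shared vertices appear in the
same relative order. -/
def Aligned {V : Type*} [DecidableEq V] {G : SimpleGraph V} {x a b : V}
    (P : G.Walk x a) (P' : G.Walk x b) : Prop :=
  ∀ u v : V, u ∈ P.support → v ∈ P.support → u ∈ P'.support → v ∈ P'.support →
    P.support.idxOf u < P.support.idxOf v →
    P'.support.idxOf u < P'.support.idxOf v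

/-- Two paths with common origin `x` are internally disjoint: every common vertex is a
common endpoint. -/
def IntDisjoint {V : Type*} {G : SimpleGraph V} {x a b : V}
    (P : G.Walk x a) (Q : G.Walk x b) : Prop :=
  ∀ v : V, v ∈ P.support → v ∈ Q.support → (v = x ∨ v = a) ∧ (v = x ∨ v = b)

/-- 2-connected: at least 3 vertices, connected, and no cut vertex. -/
def TwoConnected {V : Type*} [Fintype V] (G : SimpleGraph V) : Prop :=
  3 ≤ Fintype.card V ∧ G.Connected ∧
    ∀ v : V, ((⊤ : G.Subgraph).deleteVerts {v}).coe.Connected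

/-- A lollipop: a cycle `C` and a path `P` whose vertex sets meet exactly in the
vertex `a`, an endpoint of `P` lying on `C`. -/
def IsLollipop {V : Type*} {G : SimpleGraph V} {v a w : V}
    (C : G.Walk v v) (P : G.Walk a w) : Prop :=
  C.IsCycle ∧ P.IsPath ∧ a ∈ C.support ∧ ∀ u ∈ C.support, u ∈ P.support → u = a


set_option linter.unusedSectionVars false

section Helpers

variable {V : Type*} [DecidableEq V] {G : SimpleGraph V}

lemma support_eq_append_concat {x y : V} (p : G.Walk x y) :
    ∃ l : List V, p.support = l ++ [y] := by
  induction p with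
  | nil => exact ⟨[], rfl⟩
  | @cons u v w h p ih =>
    obtain ⟨l, hl⟩ := ih
    exact ⟨u :: l, by simp [hl]⟩

/-- In a path, the final endpoint has maximal index in the support. -/
lemma idxOf_lt_endpoint {x y : V} {p : G.Walk x y} (hp : p.IsPath)
    {u : V} (hu : u ∈ p.support) (hne : u ≠ y) :
    p.support.idxOf u < p.support.idxOf y := by
  obtain ⟨l, hl⟩ := support_eq_append_concat p
  have hnd := hp.support_nodup
  rw [hl] at hnd hu ⊢
  have hyl : y ∉ l := fun hyl =>
    (List.disjoint_of_nodup_append hnd) hyl (List.mem_singleton_self y)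
  have hul : u ∈ l := by
    rcases List.mem_append.mp hu with h | h
    · exact h
    · exact absurd (List.mem_singleton.mp h) hne
  rw [List.idxOf_append_of_notMem hyl, List.idxOf_append_of_mem hul]
  simpa [List.idxOf_cons_self] using List.idxOf_lt_length_iff.mpr hul

lemma not_endpoint_lt {x y : V} {p : G.Walk x y} (hp : p.IsPath)
    {v : V} (hv : v ∈ p.support) :
    ¬ p.support.idxOf y < p.support.idxOf v := by
  intro h
  by_cases hvy : v = y
  · subst hvy; exact lt_irrefl _ h
  · exact absurd (lt_trans h (idxOf_lt_endpoint hp hv hvy)) (lt_irrefl _)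

lemma idxOf_append_lt {α : Type*} [DecidableEq α] {l₁ l₂ : List α} {u v : α}
    (hu : u ∈ l₁) (hv : v ∉ l₁) :
    (l₁ ++ l₂).idxOf u < (l₁ ++ l₂).idxOf v := by
  rw [List.idxOf_append_of_mem hu, List.idxOf_append_of_notMem hv]
  exact lt_of_lt_of_le (List.idxOf_lt_length_iff.mpr hu) (Nat.le_add_right _ _)

lemma isPath_append' {x m z : V} {p : G.Walk x m} {q : G.Walk m z}
    (hp : p.IsPath) (hq : q.IsPath)
    (h : ∀ v, v ∈ p.support → v ∈ q.support → v = m) : (p.append q).IsPath := by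
  rw [SimpleGraph.Walk.isPath_def, SimpleGraph.Walk.support_append, List.nodup_append']
  refine ⟨hp.support_nodup, hq.support_nodup.tail, ?_⟩
  intro v hv1 hv2
  have hv2' : v ∈ q.support := List.mem_of_mem_tail hv2
  have hvm := h v hv1 hv2'
  have hnd := hq.support_nodup
  rw [q.support_eq_cons] at hnd
  exact (List.nodup_cons.mp hnd).1 (hvm ▸ hv2)

lemma isPath_concat' {x m z : V} {p : G.Walk x m}
    (hp : p.IsPath) (h : G.Adj m z) (hz : z ∉ p.support) : (p.concat h).IsPath := by
  rw [SimpleGraph.Walk.concat_eq_append]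
  refine isPath_append' hp ?_ ?_
  · rw [SimpleGraph.Walk.cons_isPath_iff]
    exact ⟨SimpleGraph.Walk.IsPath.nil, by simp [h.ne]⟩
  · intro v hv1 hv2
    simp only [SimpleGraph.Walk.support_cons, SimpleGraph.Walk.support_nil,
      List.mem_cons, List.mem_singleton] at hv2
    rcases hv2 with rfl | rfl | h
    · rfl
    · exact absurd hv1 hz
    · cases h

lemma endpoint_not_mem_takeUntil {x w z : V} {Q : G.Walk x w} (hQ : Q.IsPath)
    (hz : z ∈ Q.support) (hzw : z ≠ w) : w ∉ (Q.takeUntil z hz).support := by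
  intro hw
  have hspec := Q.take_spec hz
  have hnd : ((Q.takeUntil z hz).support ++ (Q.dropUntil z hz).support.tail).Nodup := by
    rw [← SimpleGraph.Walk.support_append, hspec]; exact hQ.support_nodup
  have hw2 : w ∈ (Q.dropUntil z hz).support.tail := by
    have h1 : w ∈ (Q.dropUntil z hz).support := SimpleGraph.Walk.end_mem_support _
    rw [(Q.dropUntil z hz).support_eq_cons] at h1
    rcases List.mem_cons.mp h1 with h | h
    · exact absurd h.symm hzw
    · exact h
  exact (List.disjoint_of_nodup_append hnd) hw hw2

lemma exists_firstHit (p : V → Prop) [DecidablePred p] :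
    ∀ {a b : V} (R : G.Walk a b), p b →
    ∃ (t : V) (Q : G.Walk a t), p t ∧ (∀ v ∈ Q.support, p v → v = t) ∧
      Q.support <+: R.support ∧ (R.IsPath → Q.IsPath) := by
  intro a b R
  induction R with
  | nil =>
    intro hb
    exact ⟨_, SimpleGraph.Walk.nil, hb, by simp +contextual,
      List.prefix_refl _, fun _ => SimpleGraph.Walk.IsPath.nil⟩
  | @cons a' c' b' h R ih =>
    intro hb
    by_cases ha : p a'
    · refine ⟨a', SimpleGraph.Walk.nil, ha, by simp +contextual, ?_, fun _ => SimpleGraph.Walk.IsPath.nil⟩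
      exact ⟨R.support, by simp⟩
    · obtain ⟨t, Q, hpt, hQ, hpre, hpath⟩ := ih hb
      refine ⟨t, SimpleGraph.Walk.cons h Q, hpt, ?_, ?_, ?_⟩
      · intro v hv hpv
        rw [SimpleGraph.Walk.support_cons] at hv
        rcases List.mem_cons.mp hv with rfl | hv
        · exact absurd hpv ha
        · exact hQ v hv hpv
      · rw [SimpleGraph.Walk.support_cons, SimpleGraph.Walk.support_cons]
        obtain ⟨r, hr⟩ := hpre
        exact ⟨r, by rw [List.cons_append, hr]⟩
      · intro hR
        rw [SimpleGraph.Walk.cons_isPath_iff] at hR ⊢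
        exact ⟨hpath hR.1, fun hmem => hR.2 (hpre.subset hmem)⟩

lemma exists_path_avoiding
    (hG : ∀ v : V, ((⊤ : G.Subgraph).deleteVerts {v}).coe.Connected)
    (w a b : V) (ha : a ≠ w) (hb : b ≠ w) :
    ∃ P : G.Walk a b, P.IsPath ∧ w ∉ P.support := by
  have hconn := hG w
  have hav : a ∈ ((⊤ : G.Subgraph).deleteVerts {w}).verts := by simp [ha]
  have hbv : b ∈ ((⊤ : G.Subgraph).deleteVerts {w}).verts := by simp [hb]
  obtain ⟨q⟩ := hconn.preconnected ⟨a, hav⟩ ⟨b, hbv⟩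
  let q' : G.Walk a b := q.map ((⊤ : G.Subgraph).deleteVerts {w}).hom
  refine ⟨q'.bypass, q'.bypass_isPath, ?_⟩
  intro hw
  have h1 := q'.support_bypass_subset hw
  replace h1 : w ∈ q.support.map ((⊤ : G.Subgraph).deleteVerts {w}).hom := by
    have := SimpleGraph.Walk.support_map ((⊤ : G.Subgraph).deleteVerts {w}).hom q
    exact (congrArg (w ∈ ·) this).mp h1
  obtain ⟨⟨u, hu⟩, _, huw⟩ := List.mem_map.mp h1
  simp only [Subgraph.deleteVerts_verts, Subgraph.verts_top, Set.mem_diff,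
    Set.mem_singleton_iff] at hu
  exact hu.2 huw

end Helpers

section Core

variable {V : Type*} [DecidableEq V] {G : SimpleGraph V}

lemma aligned_refl {x y : V} (W : G.Walk x y) : Aligned W W :=
  fun _ _ _ _ _ _ h => h

lemma aligned_concat {x c d y : V} {W' : G.Walk x c} {Q : G.Walk x d}
    (hW' : W'.IsPath) (hQ : Q.IsPath) (hal : Aligned W' Q)
    (hyW' : y ∉ W'.support) (hyQ : y ∉ Q.support)
    (h1 : G.Adj c y) (h2 : G.Adj d y) :
    Aligned (W'.concat h1) (Q.concat h2) := by
  have hWs : (W'.concat h1).support = W'.support ++ [y] := by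
    rw [SimpleGraph.Walk.support_concat]
  have hQs : (Q.concat h2).support = Q.support ++ [y] := by
    rw [SimpleGraph.Walk.support_concat]
  have hWp : (W'.concat h1).IsPath := isPath_concat' hW' h1 hyW'
  have hQp : (Q.concat h2).IsPath := isPath_concat' hQ h2 hyQ
  intro u v hu hv hu' hv' hlt
  by_cases hvy : v = y
  · by_cases huy : u = y
    · rw [huy, hvy] at hlt; exact absurd hlt (lt_irrefl _)
    · rw [hvy]; exact idxOf_lt_endpoint hQp hu' huy
  · by_cases huy : u = y
    · rw [huy] at hlt; exact absurd hlt (not_endpoint_lt hWp hv)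
    · have huW : u ∈ W'.support := by
        rw [hWs] at hu
        rcases List.mem_append.mp hu with h | h
        · exact h
        · exact absurd (List.mem_singleton.mp h) huy
      have hvW : v ∈ W'.support := by
        rw [hWs] at hv
        rcases List.mem_append.mp hv with h | h
        · exact h
        · exact absurd (List.mem_singleton.mp h) hvy
      have huQ : u ∈ Q.support := by
        rw [hQs] at hu'
        rcases List.mem_append.mp hu' with h | h
        · exact h
        · exact absurd (List.mem_singleton.mp h) huy
      have hvQ : v ∈ Q.support := by
        rw [hQs] at hv'
        rcases List.mem_append.mp hv' with h | h
        · exact h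
        · exact absurd (List.mem_singleton.mp h) hvy
      rw [hWs, List.idxOf_append_of_mem huW, List.idxOf_append_of_mem hvW] at hlt
      have h3 := hal u v huW hvW huQ hvQ hlt
      rw [hQs, List.idxOf_append_of_mem huQ, List.idxOf_append_of_mem hvQ]
      exact h3

lemma core {x w y α t : V} (hxy : x ≠ y)
    {W' : G.Walk x w} (hW' : W'.IsPath) (hyW' : y ∉ W'.support)
    (hadj : G.Adj w y)
    {Q1 Q2 : G.Walk x w} (hQ1 : Q1.IsPath) (hQ2 : Q2.IsPath)
    (hdisj : IntDisjoint Q1 Q2)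
    (hal1 : Aligned W' Q1) (hal2 : Aligned W' Q2)
    (hα : α ∈ Q1.support)
    {B : G.Walk α t} (hB : B.IsPath)
    {Rv : G.Walk t y} (hRv : Rv.IsPath)
    (hB1 : ∀ v ∈ B.support, v ≠ α → v ∉ Q1.support ∧ v ∉ Q2.support ∧ v ∈ W'.support ∧
      W'.support.idxOf α < W'.support.idxOf v)
    (hB2 : ∀ u ∈ B.support, ∀ v ∈ B.support, W'.support.idxOf u < W'.support.idxOf v →
      B.support.idxOf u < B.support.idxOf v)
    (hR1 : ∀ v ∈ Rv.support, v ≠ t → v ≠ y → v ∉ Q1.support ∧ v ∉ Q2.support ∧ v ∉ W'.support)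
    (hwB : w ∉ B.support) (hwR : w ∉ Rv.support) (hαw : α ≠ w)
    (hyQ1 : y ∈ Q1.support → y = t) (hyQ2 : y ∉ Q2.support) :
    ∃ P1 P2 : G.Walk x y, P1.IsPath ∧ P2.IsPath ∧ P1 ≠ P2 ∧ IntDisjoint P1 P2 ∧
      Aligned (W'.concat hadj) P1 ∧ Aligned (W'.concat hadj) P2 := by
  classical
  set A := Q1.takeUntil α hα with hAdef
  set E := B.append Rv with hEdef
  set P1 := A.append E with hP1def
  set P2 := Q2.concat hadj with hP2def
  have hyw : y ≠ w := fun h => hyW' (h ▸ W'.end_mem_support)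
  have hyB : y ∈ B.support → y = t := by
    intro hyBmem
    by_cases h : y = α
    · exact hyQ1 (h ▸ hα)
    · exact absurd (hB1 y hyBmem h).2.2.1 hyW'
  have hA : A.IsPath := hQ1.takeUntil hα
  have hAsub : A.support ⊆ Q1.support := SimpleGraph.Walk.support_takeUntil_subset _ _
  have hQ1s : Q1.support = A.support ++ (Q1.dropUntil α hα).support.tail := by
    rw [← SimpleGraph.Walk.support_append, Q1.take_spec hα]
  have hwA : w ∉ A.support := endpoint_not_mem_takeUntil hQ1 hα hαw
  have htRt : t ∉ Rv.support.tail := by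
    have h := hRv.support_nodup
    rw [Rv.support_eq_cons] at h
    exact (List.nodup_cons.mp h).1
  have hE : E.IsPath := by
    refine isPath_append' hB hRv ?_
    intro v hvB hvR
    by_cases hvt : v = t
    · exact hvt
    · by_cases hvy : v = y
      · rw [hvy]; exact hyB (hvy ▸ hvB)
      · have h1 := hR1 v hvR hvt hvy
        by_cases hvα : v = α
        · exact absurd hα (hvα ▸ h1.1)
        · exact absurd (hB1 v hvB hvα).2.2.1 h1.2.2
  have hP1 : P1.IsPath := by
    refine isPath_append' hA hE ?_
    intro v hvA hvE
    rw [hEdef, SimpleGraph.Walk.support_append] at hvE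
    rcases List.mem_append.mp hvE with hvB | hvRt
    · by_cases hvα : v = α
      · exact hvα
      · exact absurd (hAsub hvA) (hB1 v hvB hvα).1
    · have hvR : v ∈ Rv.support := List.mem_of_mem_tail hvRt
      have hvt : v ≠ t := fun h => htRt (h ▸ hvRt)
      by_cases hvy : v = y
      · exact absurd (hvy.trans (hyQ1 (hvy ▸ (hAsub hvA)))) hvt
      · exact absurd (hAsub hvA) (hR1 v hvR hvt hvy).1
  have hP2 : P2.IsPath := isPath_concat' hQ2 hadj hyQ2
  have hP1s : P1.support = A.support ++ E.support.tail := SimpleGraph.Walk.support_append _ _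
  have hEs : E.support = B.support ++ Rv.support.tail := SimpleGraph.Walk.support_append _ _
  have hP2s : P2.support = Q2.support ++ [y] := by
    rw [hP2def, SimpleGraph.Walk.support_concat]
  have hEt : E.support.tail = B.support.tail ++ Rv.support.tail := by
    rw [hEs, B.support_eq_cons]; simp
  have hmemEt : ∀ v ∈ E.support.tail, v ∈ B.support.tail ∨ v ∈ Rv.support.tail := by
    intro v hv; rw [hEt] at hv; exact List.mem_append.mp hv
  have hαBt : α ∉ B.support.tail := by
    have h := hB.support_nodup
    rw [B.support_eq_cons] at h
    exact (List.nodup_cons.mp h).1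
  have hwP1 : w ∉ P1.support := by
    rw [hP1s]
    intro h
    rcases List.mem_append.mp h with h1 | h1
    · exact hwA h1
    · rcases hmemEt w h1 with h2 | h2
      · exact hwB (List.mem_of_mem_tail h2)
      · exact hwR (List.mem_of_mem_tail h2)
  have hwP2 : w ∈ P2.support := by
    rw [hP2s]; exact List.mem_append_left _ Q2.end_mem_support
  have hne : P1 ≠ P2 := fun h => hwP1 (by rw [h]; exact hwP2)
  have hWp : (W'.concat hadj).IsPath := isPath_concat' hW' hadj hyW'
  have hWs : (W'.concat hadj).support = W'.support ++ [y] := by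
    rw [SimpleGraph.Walk.support_concat]
  have hdisjP : IntDisjoint P1 P2 := by
    intro v hv1 hv2
    rw [hP2s] at hv2
    rcases List.mem_append.mp hv2 with hvQ2 | hvy
    · have hvx : v = x := by
        rw [hP1s] at hv1
        rcases List.mem_append.mp hv1 with hvA | hvEt
        · rcases (hdisj v (hAsub hvA) hvQ2).1 with h | h
          · exact h
          · exact absurd hvA (h ▸ hwA)
        · rcases hmemEt v hvEt with hvBt | hvRt
          · have hvB : v ∈ B.support := List.mem_of_mem_tail hvBt
            by_cases hvα : v = α
            · rcases (hdisj α hα (hvα ▸ hvQ2)).1 with h | h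
              · exact hvα.trans h
              · exact absurd h hαw
            · exact absurd hvQ2 (hB1 v hvB hvα).2.1
          · have hvR : v ∈ Rv.support := List.mem_of_mem_tail hvRt
            have hvt : v ≠ t := fun h => htRt (h ▸ hvRt)
            have hvy' : v ≠ y := fun h => hyQ2 (h ▸ hvQ2)
            exact absurd hvQ2 (hR1 v hvR hvt hvy').2.1
      exact ⟨Or.inl hvx, Or.inl hvx⟩
    · have hvy' : v = y := List.mem_singleton.mp hvy
      exact ⟨Or.inr hvy', Or.inr hvy'⟩
  have hAl2 : Aligned (W'.concat hadj) P2 :=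
    aligned_concat hW' hQ2 hal2 hyW' hyQ2 hadj hadj
  have hAl1 : Aligned (W'.concat hadj) P1 := by
    intro u v hu hv hu1 hv1 hlt
    by_cases hvy : v = y
    · by_cases huy : u = y
      · rw [huy, hvy] at hlt; exact absurd hlt (lt_irrefl _)
      · rw [hvy]; exact idxOf_lt_endpoint hP1 hu1 huy
    · by_cases huy : u = y
      · rw [huy] at hlt; exact absurd hlt (not_endpoint_lt hWp hv)
      · have huW : u ∈ W'.support := by
          rw [hWs] at hu
          rcases List.mem_append.mp hu with h | h
          · exact h
          · exact absurd (List.mem_singleton.mp h) huy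
        have hvW : v ∈ W'.support := by
          rw [hWs] at hv
          rcases List.mem_append.mp hv with h | h
          · exact h
          · exact absurd (List.mem_singleton.mp h) hvy
        have hlt' : W'.support.idxOf u < W'.support.idxOf v := by
          rwa [hWs, List.idxOf_append_of_mem huW, List.idxOf_append_of_mem hvW] at hlt
        have hnd1 : A.support.Disjoint E.support.tail := by
          have h := hP1.support_nodup
          rw [hP1s] at h
          exact List.disjoint_of_nodup_append h
        rw [hP1s] at hu1 hv1 ⊢
        rcases List.mem_append.mp hu1 with huA | huEt
        · rcases List.mem_append.mp hv1 with hvA | hvEt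
          · have h1 := hal1 u v huW hvW (hAsub huA) (hAsub hvA) hlt'
            rw [hQ1s, List.idxOf_append_of_mem huA, List.idxOf_append_of_mem hvA] at h1
            rw [List.idxOf_append_of_mem huA, List.idxOf_append_of_mem hvA]
            exact h1
          · exact idxOf_append_lt huA (fun h => hnd1 h hvEt)
        · rcases hmemEt u huEt with huBt | huRt
          · have huB : u ∈ B.support := List.mem_of_mem_tail huBt
            have huα : u ≠ α := fun h => hαBt (h ▸ huBt)
            have h4 := (hB1 u huB huα).2.2.2
            rcases List.mem_append.mp hv1 with hvA | hvEt
            · exfalso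
              have hαv : W'.support.idxOf α < W'.support.idxOf v := lt_trans h4 hlt'
              have hαW : α ∈ W'.support := by
                by_contra hc
                rw [List.idxOf_eq_length_iff.mpr hc] at hαv
                exact absurd (lt_trans hαv (List.idxOf_lt_length_iff.mpr hvW)) (lt_irrefl _)
              have h5 := hal1 α v hαW hvW hα (hAsub hvA) hαv
              rw [hQ1s, List.idxOf_append_of_mem A.end_mem_support,
                List.idxOf_append_of_mem hvA] at h5
              by_cases hvα : v = α
              · rw [hvα] at hαv; exact absurd hαv (lt_irrefl _)
              · exact absurd h5 (not_lt.mpr (le_of_lt (idxOf_lt_endpoint hA hvA hvα)))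
            · rcases hmemEt v hvEt with hvBt | hvRt
              · have hvB : v ∈ B.support := List.mem_of_mem_tail hvBt
                have hvα : v ≠ α := fun h => hαBt (h ▸ hvBt)
                have h7 := hB2 u huB v hvB hlt'
                have h8 : B.support.tail.idxOf u < B.support.tail.idxOf v := by
                  rw [B.support_eq_cons, List.idxOf_cons_ne _ (Ne.symm huα),
                    List.idxOf_cons_ne _ (Ne.symm hvα)] at h7
                  omega
                have huA' : u ∉ A.support := fun h => hnd1 h huEt
                have hvA' : v ∉ A.support := fun h => hnd1 h hvEt
                rw [List.idxOf_append_of_notMem huA', List.idxOf_append_of_notMem hvA',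
                  hEt, List.idxOf_append_of_mem huBt, List.idxOf_append_of_mem hvBt]
                omega
              · exfalso
                have hvR : v ∈ Rv.support := List.mem_of_mem_tail hvRt
                have hvt : v ≠ t := fun h => htRt (h ▸ hvRt)
                exact (hR1 v hvR hvt hvy).2.2 hvW
          · exfalso
            have huR : u ∈ Rv.support := List.mem_of_mem_tail huRt
            have hut : u ≠ t := fun h => htRt (h ▸ huRt)
            exact (hR1 u huR hut huy).2.2 huW
  exact ⟨P1, P2, hP1, hP2, hne, hdisjP, hAl1, hAl2⟩

end Core

section Main

variable {V : Type*} [DecidableEq V] {G : SimpleGraph V}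

lemma exists_concat_decomp {x y : V} (hxy : x ≠ y) (W : G.Walk x y) :
    ∃ (w : V) (W' : G.Walk x w) (h : G.Adj w y), W = W'.concat h := by
  obtain ⟨w, hadj, q, hq⟩ : ∃ w, ∃ hadj : G.Adj y w, ∃ q : G.Walk w x,
      W.reverse = SimpleGraph.Walk.cons hadj q := by
    cases hrev : W.reverse with
    | nil => exact absurd rfl hxy
    | cons h q => exact ⟨_, h, q, rfl⟩
  refine ⟨w, q.reverse, hadj.symm, ?_⟩
  rw [← W.reverse_reverse, hq, SimpleGraph.Walk.reverse_cons, SimpleGraph.Walk.concat_eq_append]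

lemma exists_second_vertex {a b : V} (q : G.Walk a b) (h : a ≠ b) :
    ∃ z, G.Adj a z ∧ z ∈ q.support := by
  cases q with
  | nil => exact absurd rfl h
  | cons h' p =>
    refine ⟨_, h', ?_⟩
    rw [SimpleGraph.Walk.support_cons]
    exact List.mem_cons_of_mem _ p.start_mem_support

theorem stmt_2' {V : Type*} [Fintype V] [DecidableEq V] {G : SimpleGraph V}
    (hG : TwoConnected G) {x y : V} (hxy : x ≠ y) (W : G.Walk x y) (hW : W.IsPath) :
    ∃ (P1 P2 : G.Walk x y), P1.IsPath ∧ P2.IsPath ∧ P1 ≠ P2 ∧ IntDisjoint P1 P2 ∧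
      Aligned W P1 ∧ Aligned W P2 := by
  obtain ⟨hcard, hconn, hdel⟩ := hG
  suffices H : ∀ n : ℕ, ∀ x y : V, x ≠ y → ∀ W : G.Walk x y, W.IsPath → W.length ≤ n →
      ∃ P1 P2 : G.Walk x y, P1.IsPath ∧ P2.IsPath ∧ P1 ≠ P2 ∧ IntDisjoint P1 P2 ∧
        Aligned W P1 ∧ Aligned W P2 by
    exact H W.length x y hxy W hW le_rfl
  intro n
  induction n with
  | zero =>
    intro x y hxy W _ hlen
    exact absurd (SimpleGraph.Walk.eq_of_length_eq_zero (Nat.le_zero.mp hlen)) hxy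
  | succ n ih =>
    intro x y hxy W hW hlen
    obtain ⟨w, W', hadj, rfl⟩ := exists_concat_decomp hxy W
    have hWs : (W'.concat hadj).support = W'.support ++ [y] := by
      rw [SimpleGraph.Walk.support_concat]
    have hnd := hW.support_nodup
    rw [hWs, List.nodup_append'] at hnd
    have hW' : W'.IsPath := (SimpleGraph.Walk.isPath_def _).mpr hnd.1
    have hyW' : y ∉ W'.support := fun h => hnd.2.2 h (List.mem_singleton_self y)
    have hyw : y ≠ w := fun h => hyW' (h ▸ W'.end_mem_support)
    by_cases hxw : x = w
    · -- base case : W is a single edge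
      subst hxw
      have hWnil : W' = SimpleGraph.Walk.nil := SimpleGraph.Walk.isPath_iff_eq_nil.mp hW'
      have hu : ∃ u : V, u ≠ x ∧ u ≠ y := by
        by_contra hc
        push_neg at hc
        have hsub : (Finset.univ : Finset V) ⊆ {x, y} := by
          intro u _
          rcases eq_or_ne u x with h | h
          · simp [h]
          · simp [hc u h]
        have h2 := Finset.card_le_card hsub
        rw [Finset.card_univ] at h2
        have h3 : ({x, y} : Finset V).card ≤ 2 :=
          le_trans (Finset.card_insert_le _ _) (by simp)
        omega
      obtain ⟨u, hux, huy⟩ := hu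
      obtain ⟨q', hq'path, hxq'⟩ := exists_path_avoiding hdel x y u (Ne.symm hxy) hux
      obtain ⟨z, hyz, hzq'⟩ := exists_second_vertex q' (Ne.symm huy)
      have hzx : z ≠ x := fun h => hxq' (h ▸ hzq')
      have hzy : G.Adj z y := hyz.symm
      have hzyne : z ≠ y := hyz.ne'
      obtain ⟨A, hApath, hyA⟩ := exists_path_avoiding hdel y x z hxy hzyne
      have halA : Aligned W' A := by
        intro a b ha hb _ _ hlt
        rw [hWnil] at ha hb
        simp only [SimpleGraph.Walk.support_nil, List.mem_singleton] at ha hb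
        rw [ha, hb] at hlt
        exact absurd hlt (lt_irrefl _)
      refine ⟨W'.concat hadj, A.concat hzy, hW, isPath_concat' hApath hzy hyA, ?_, ?_,
        aligned_refl _, aligned_concat hW' hApath halA hyW' hyA hadj hzy⟩
      · intro h
        have hz2 : z ∈ (A.concat hzy).support := by
          rw [SimpleGraph.Walk.support_concat]
          exact List.mem_append_left _ A.end_mem_support
        rw [← h, hWs, hWnil] at hz2
        simp only [SimpleGraph.Walk.support_nil, List.singleton_append, List.mem_cons,
          List.mem_singleton] at hz2
        rcases hz2 with h2 | h2 | h2
        · exact hzx h2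
        · exact hzyne h2
        · cases h2
      · intro v hv1 hv2
        rw [hWs, hWnil] at hv1
        simp only [SimpleGraph.Walk.support_nil, List.singleton_append, List.mem_cons,
          List.mem_singleton] at hv1
        rcases hv1 with h2 | h2 | h2
        · exact ⟨Or.inl h2, Or.inl h2⟩
        · exact ⟨Or.inr h2, Or.inr h2⟩
        · cases h2
    · -- inductive step
      have hlen' : W'.length ≤ n := by
        have h := SimpleGraph.Walk.length_concat W' hadj
        omega
      obtain ⟨Q1, Q2, hQ1, hQ2, hQne, hdisj, hal1, hal2⟩ := ih x w hxw W' hW' hlen'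
      have hdisj' : IntDisjoint Q2 Q1 := fun v h2 h1 => hdisj v h1 h2
      by_cases hyQ : y ∈ Q1.support ∨ y ∈ Q2.support
      · -- Case 1 : y lies on the cycle Q1 ∪ Q2
        have hB1nil : ∀ (c : V), ∀ v ∈ (SimpleGraph.Walk.nil : G.Walk c c).support, v ≠ c →
            v ∉ Q1.support ∧ v ∉ Q2.support ∧ v ∈ W'.support ∧
            W'.support.idxOf c < W'.support.idxOf v := by
          intro c v hv hne
          rw [SimpleGraph.Walk.support_nil, List.mem_singleton] at hv
          exact absurd hv hne
        have hB2nil : ∀ (c : V), ∀ u ∈ (SimpleGraph.Walk.nil : G.Walk c c).support,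
            ∀ v ∈ (SimpleGraph.Walk.nil : G.Walk c c).support,
            W'.support.idxOf u < W'.support.idxOf v →
            (SimpleGraph.Walk.nil : G.Walk c c).support.idxOf u <
            (SimpleGraph.Walk.nil : G.Walk c c).support.idxOf v := by
          intro c u hu v hv hlt
          rw [SimpleGraph.Walk.support_nil, List.mem_singleton] at hu hv
          rw [hu, hv] at hlt
          exact absurd hlt (lt_irrefl _)
        have hR1nil : ∀ (c : V), ∀ v ∈ (SimpleGraph.Walk.nil : G.Walk c c).support, v ≠ c →
            v ≠ c → v ∉ Q1.support ∧ v ∉ Q2.support ∧ v ∉ W'.support := by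
          intro c v hv hne _
          rw [SimpleGraph.Walk.support_nil, List.mem_singleton] at hv
          exact absurd hv hne
        have hwnil : ∀ c : V, c ≠ w → w ∉ (SimpleGraph.Walk.nil : G.Walk c c).support := by
          intro c hc h
          rw [SimpleGraph.Walk.support_nil, List.mem_singleton] at h
          exact hc h.symm
        by_cases hy1 : y ∈ Q1.support
        · have hy2 : y ∉ Q2.support := by
            intro h
            rcases (hdisj y hy1 h).1 with h2 | h2
            · exact hxy h2.symm
            · exact hyw h2
          exact core hxy hW' hyW' hadj hQ1 hQ2 hdisj hal1 hal2 hy1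
            (B := SimpleGraph.Walk.nil) SimpleGraph.Walk.IsPath.nil
            (Rv := SimpleGraph.Walk.nil) SimpleGraph.Walk.IsPath.nil
            (hB1nil y) (hB2nil y) (hR1nil y) (hwnil y hyw) (hwnil y hyw) hyw
            (fun _ => rfl) hy2
        · have hy2 : y ∈ Q2.support := hyQ.resolve_left hy1
          have hR1nil' : ∀ v ∈ (SimpleGraph.Walk.nil : G.Walk y y).support, v ≠ y →
              v ≠ y → v ∉ Q2.support ∧ v ∉ Q1.support ∧ v ∉ W'.support := by
            intro v hv hne _
            rw [SimpleGraph.Walk.support_nil, List.mem_singleton] at hv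
            exact absurd hv hne
          have hB1nil' : ∀ v ∈ (SimpleGraph.Walk.nil : G.Walk y y).support, v ≠ y →
              v ∉ Q2.support ∧ v ∉ Q1.support ∧ v ∈ W'.support ∧
              W'.support.idxOf y < W'.support.idxOf v := by
            intro v hv hne
            rw [SimpleGraph.Walk.support_nil, List.mem_singleton] at hv
            exact absurd hv hne
          exact core hxy hW' hyW' hadj hQ2 hQ1 hdisj' hal2 hal1 hy2
            (B := SimpleGraph.Walk.nil) SimpleGraph.Walk.IsPath.nil
            (Rv := SimpleGraph.Walk.nil) SimpleGraph.Walk.IsPath.nil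
            hB1nil' (hB2nil y) hR1nil' (hwnil y hyw) (hwnil y hyw) hyw
            (fun _ => rfl) hy1
      · push_neg at hyQ
        obtain ⟨hyQ1', hyQ2'⟩ := hyQ
        obtain ⟨R0, hR0, hwR0⟩ := exists_path_avoiding hdel w y x hyw hxw
        have hpx : (fun v => v ∈ Q1.support ∨ v ∈ Q2.support ∨ v ∈ W'.support) x :=
          Or.inl Q1.start_mem_support
        obtain ⟨t, R, hpt, hfirst, hpre, hpathR⟩ :=
          exists_firstHit (fun v => v ∈ Q1.support ∨ v ∈ Q2.support ∨ v ∈ W'.support) R0 hpx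
        have hRpath := hpathR hR0
        have hRsub : R.support ⊆ R0.support := hpre.subset
        have hwRmem : w ∉ R.support := fun h => hwR0 (hRsub h)
        have htw : t ≠ w := fun h => hwRmem (h ▸ R.end_mem_support)
        have hRvpath : R.reverse.IsPath := hRpath.reverse
        have hRvsupp : ∀ v, v ∈ R.reverse.support → v ∈ R.support := by
          intro v hv
          rwa [SimpleGraph.Walk.support_reverse, List.mem_reverse] at hv
        have hR1 : ∀ v ∈ R.reverse.support, v ≠ t → v ≠ y →
            v ∉ Q1.support ∧ v ∉ Q2.support ∧ v ∉ W'.support := by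
          intro v hv hvt _
          have hv' := hRvsupp v hv
          have hnp : ¬ (v ∈ Q1.support ∨ v ∈ Q2.support ∨ v ∈ W'.support) :=
            fun hpv => hvt (hfirst v hv' hpv)
          push_neg at hnp
          exact hnp
        have hR1' : ∀ v ∈ R.reverse.support, v ≠ t → v ≠ y →
            v ∉ Q2.support ∧ v ∉ Q1.support ∧ v ∉ W'.support := by
          intro v hv hvt hvy
          obtain ⟨h1, h2, h3⟩ := hR1 v hv hvt hvy
          exact ⟨h2, h1, h3⟩
        have hwRv : w ∉ R.reverse.support := fun h => hwRmem (hRvsupp w h)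
        by_cases htQ : t ∈ Q1.support ∨ t ∈ Q2.support
        · -- Case 2a
          have hB1nil : ∀ v ∈ (SimpleGraph.Walk.nil : G.Walk t t).support, v ≠ t →
              v ∉ Q1.support ∧ v ∉ Q2.support ∧ v ∈ W'.support ∧
              W'.support.idxOf t < W'.support.idxOf v := by
            intro v hv hne
            rw [SimpleGraph.Walk.support_nil, List.mem_singleton] at hv
            exact absurd hv hne
          have hB1nil' : ∀ v ∈ (SimpleGraph.Walk.nil : G.Walk t t).support, v ≠ t →
              v ∉ Q2.support ∧ v ∉ Q1.support ∧ v ∈ W'.support ∧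
              W'.support.idxOf t < W'.support.idxOf v := by
            intro v hv hne
            rw [SimpleGraph.Walk.support_nil, List.mem_singleton] at hv
            exact absurd hv hne
          have hB2nil : ∀ u ∈ (SimpleGraph.Walk.nil : G.Walk t t).support,
              ∀ v ∈ (SimpleGraph.Walk.nil : G.Walk t t).support,
              W'.support.idxOf u < W'.support.idxOf v →
              (SimpleGraph.Walk.nil : G.Walk t t).support.idxOf u <
              (SimpleGraph.Walk.nil : G.Walk t t).support.idxOf v := by
            intro u hu v hv hlt
            rw [SimpleGraph.Walk.support_nil, List.mem_singleton] at hu hv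
            rw [hu, hv] at hlt
            exact absurd hlt (lt_irrefl _)
          have hwnil : w ∉ (SimpleGraph.Walk.nil : G.Walk t t).support := by
            intro h
            rw [SimpleGraph.Walk.support_nil, List.mem_singleton] at h
            exact htw h.symm
          rcases htQ with ht1 | ht2
          · exact core hxy hW' hyW' hadj hQ1 hQ2 hdisj hal1 hal2 ht1
              (B := SimpleGraph.Walk.nil) SimpleGraph.Walk.IsPath.nil hRvpath
              hB1nil hB2nil hR1 hwnil hwRv htw (fun h => (hyQ1' h).elim) hyQ2'
          · exact core hxy hW' hyW' hadj hQ2 hQ1 hdisj' hal2 hal1 ht2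
              (B := SimpleGraph.Walk.nil) SimpleGraph.Walk.IsPath.nil hRvpath
              hB1nil' hB2nil hR1' hwnil hwRv htw (fun h => (hyQ2' h).elim) hyQ1'
        · -- Case 2b
          push_neg at htQ
          have htW : t ∈ W'.support := by
            rcases hpt with h | h | h
            · exact absurd h htQ.1
            · exact absurd h htQ.2
            · exact h
          have hTpath : (W'.takeUntil t htW).IsPath := hW'.takeUntil htW
          have hTsub : (W'.takeUntil t htW).support ⊆ W'.support :=
            SimpleGraph.Walk.support_takeUntil_subset _ _
          have hW's : W'.support =
              (W'.takeUntil t htW).support ++ (W'.dropUntil t htW).support.tail := by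
            rw [← SimpleGraph.Walk.support_append, W'.take_spec htW]
          have hwT : w ∉ (W'.takeUntil t htW).support := endpoint_not_mem_takeUntil hW' htW htw
          have hq2x : (fun v => v ∈ Q1.support ∨ v ∈ Q2.support) x :=
            Or.inl Q1.start_mem_support
          obtain ⟨αv, B0, hq2α, hfirstB, hpreB, hpathB⟩ :=
            exists_firstHit (fun v => v ∈ Q1.support ∨ v ∈ Q2.support)
              (W'.takeUntil t htW).reverse hq2x
          have hB0path := hpathB hTpath.reverse
          have hBpath : B0.reverse.IsPath := hB0path.reverse
          have hBsupp : B0.reverse.support = B0.support.reverse :=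
            SimpleGraph.Walk.support_reverse _
          obtain ⟨r, hr⟩ := hpreB
          have hsuf : r.reverse ++ B0.reverse.support = (W'.takeUntil t htW).support := by
            have h := congrArg List.reverse hr
            rw [List.reverse_append, SimpleGraph.Walk.support_reverse,
              List.reverse_reverse] at h
            rw [hBsupp]
            exact h
          have hndT := hTpath.support_nodup
          have hdisjT : r.reverse.Disjoint B0.reverse.support := by
            rw [← hsuf] at hndT
            exact List.disjoint_of_nodup_append hndT
          have hBmemT : ∀ z ∈ B0.reverse.support, z ∈ (W'.takeUntil t htW).support := by
            intro z hz
            rw [← hsuf]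
            exact List.mem_append_right _ hz
          have hidxT : ∀ z ∈ B0.reverse.support, (W'.takeUntil t htW).support.idxOf z =
              r.reverse.length + B0.reverse.support.idxOf z := by
            intro z hz
            rw [← hsuf, List.idxOf_append_of_notMem (fun h => hdisjT h hz)]
          have hidxW' : ∀ z ∈ B0.reverse.support,
              W'.support.idxOf z = (W'.takeUntil t htW).support.idxOf z := by
            intro z hz
            rw [hW's, List.idxOf_append_of_mem (hBmemT z hz)]
          have hαB : B0.reverse.support.idxOf αv = 0 := by
            rw [B0.reverse.support_eq_cons]
            exact List.idxOf_cons_self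
          have hB0mem : ∀ v ∈ B0.reverse.support, v ∈ B0.support := by
            intro v hv
            rwa [hBsupp, List.mem_reverse] at hv
          have hB1 : ∀ v ∈ B0.reverse.support, v ≠ αv →
              v ∉ Q1.support ∧ v ∉ Q2.support ∧ v ∈ W'.support ∧
              W'.support.idxOf αv < W'.support.idxOf v := by
            intro v hv hvα
            have hnotq : ¬ (v ∈ Q1.support ∨ v ∈ Q2.support) :=
              fun hq => hvα (hfirstB v (hB0mem v hv) hq)
            push_neg at hnotq
            refine ⟨hnotq.1, hnotq.2, hTsub (hBmemT v hv), ?_⟩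
            rw [hidxW' v hv, hidxW' αv B0.reverse.start_mem_support,
              hidxT v hv, hidxT αv B0.reverse.start_mem_support, hαB]
            have hvne : B0.reverse.support.idxOf v ≠ 0 := by
              rw [B0.reverse.support_eq_cons, List.idxOf_cons_ne _ (Ne.symm hvα)]
              exact Nat.succ_ne_zero _
            omega
          have hB1' : ∀ v ∈ B0.reverse.support, v ≠ αv →
              v ∉ Q2.support ∧ v ∉ Q1.support ∧ v ∈ W'.support ∧
              W'.support.idxOf αv < W'.support.idxOf v := by
            intro v hv hvα
            obtain ⟨h1, h2, h3, h4⟩ := hB1 v hv hvα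
            exact ⟨h2, h1, h3, h4⟩
          have hB2 : ∀ u ∈ B0.reverse.support, ∀ v ∈ B0.reverse.support,
              W'.support.idxOf u < W'.support.idxOf v →
              B0.reverse.support.idxOf u < B0.reverse.support.idxOf v := by
            intro u hu v hv hlt
            rw [hidxW' u hu, hidxW' v hv, hidxT u hu, hidxT v hv] at hlt
            omega
          have hwB : w ∉ B0.reverse.support := fun h => hwT (hBmemT w h)
          have hαw : αv ≠ w := fun h => hwT (h ▸ hBmemT αv B0.reverse.start_mem_support)
          rcases hq2α with hα1 | hα2
          · exact core hxy hW' hyW' hadj hQ1 hQ2 hdisj hal1 hal2 hα1 hBpath hRvpath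
              hB1 hB2 hR1 hwB hwRv hαw (fun h => (hyQ1' h).elim) hyQ2'
          · exact core hxy hW' hyW' hadj hQ2 hQ1 hdisj' hal2 hal1 hα2 hBpath hRvpath
              hB1' hB2 hR1' hwB hwRv hαw (fun h => (hyQ2' h).elim) hyQ1'

end Main

/-- Dirac's Lemma 2: in a 2-connected graph, for any `x,y`-path `W` there are two
internally disjoint `x,y`-paths, each aligned with `W`. -/
theorem stmt_2 {V : Type*} [Fintype V] [DecidableEq V] {G : SimpleGraph V}
    (hG : TwoConnected G) {x y : V} (hxy : x ≠ y) (W : G.Walk x y) (hW : W.IsPath) :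
    ∃ (P1 P2 : G.Walk x y), P1.IsPath ∧ P2.IsPath ∧ P1 ≠ P2 ∧ IntDisjoint P1 P2 ∧
      Aligned W P1 ∧ Aligned W P2 := by
  exact stmt_2' hG hxy W hW
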